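/- (i) For every integer n with 10 ≤ n ≤ 18, 𝒮_9(n) is full, and 𝒮_9(19) is not full. (ii) For every integer m ≥ 10 and every integer n with m < n ≤ m + 6, 𝒮_m(n) is full, and 𝒮_m(m+7) is not full. -/
import Mathlib


/-- `S m n` is the set of integers `T` such that there exist integers
`x₁,…,x_m` with `x₁+⋯+x_m = T` and `x₁²+⋯+x_m² = n`. -/
def S (m n : ℕ) : Set ℤ :=
  {T : ℤ | ∃ x : Fin m → ℤ, (∑ i, x i) = T ∧ (∑ i, (x i) ^ 2) = (n : ℤ)}

/-- `sos m` is the set of integers expressible as a sum of `m` squares of integers. -/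
def sos (m : ℕ) : Set ℤ :=
  {n : ℤ | ∃ a : Fin m → ℤ, (∑ i, (a i) ^ 2) = n}

/-- The binary quadratic form `aX² + 2hXY + bY²` is a sum of `m` squares of
integral linear forms. -/
def IsSumSqLin (m : ℕ) (a h b : ℤ) : Prop :=
  ∃ α β : Fin m → ℤ,
    (∑ i, (α i) ^ 2) = a ∧ (∑ i, α i * β i) = h ∧ (∑ i, (β i) ^ 2) = b

/-- `S m n` is full: every `T` with `T ≡ n (mod 2)` and `T² < mn` lies in `S m n`. -/
def Sfull (m n : ℕ) : Prop :=
  ∀ T : ℤ, T % 2 = (n : ℤ) % 2 → T ^ 2 < (m : ℤ) * n → T ∈ S m n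

lemma sum_getD (g : ℤ → ℤ) (hg : g 0 = 0) :
    ∀ (l : List ℤ) (m : ℕ), l.length ≤ m →
      ∑ i ∈ Finset.range m, g (l.getD i 0) = (l.map g).sum := by
  intro l
  induction l with
  | nil => intro m _; simp [hg]
  | cons a t ih =>
    intro m hm
    cases m with
    | zero => simp at hm
    | succ m' =>
      rw [Finset.sum_range_succ']
      simp only [List.getD_cons_succ, List.getD_cons_zero, List.map_cons, List.sum_cons]
      rw [ih m' (by simpa using hm)]
      ring

lemma mem_S_of_list (m n : ℕ) (T : ℤ) (l : List ℤ) (hlen : l.length ≤ m)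
    (h1 : l.sum = T) (h2 : (l.map (fun x => x ^ 2)).sum = (n : ℤ)) : T ∈ S m n := by
  refine ⟨fun i => l.getD i 0, ?_, ?_⟩
  · simp only []
    rw [Fin.sum_univ_eq_sum_range (fun i => l.getD i 0) m, sum_getD (fun x => x) rfl l m hlen]
    simpa using h1
  · rw [Fin.sum_univ_eq_sum_range (fun i => (l.getD i 0) ^ 2),
      sum_getD (fun x => x ^ 2) (by norm_num) l m hlen, h2]

lemma key (m n : ℕ) (s T w : ℤ) (hs : 0 ≤ s) (hw : |w| ≤ s)
    (hpar : (s - w) % 2 = 0) (hTn : (T - n) % 2 = 0)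
    (hband : |T - 2 * w| ≤ (n : ℤ) - 4 * s) (hcnt : (n : ℤ) - 3 * s ≤ m) :
    T ∈ S m n := by
  obtain ⟨hb1, hb2⟩ := abs_le.mp hband
  obtain ⟨hw1, hw2⟩ := abs_le.mp hw
  obtain ⟨p, hp⟩ : ∃ p : ℕ, (p : ℤ) * 2 = (n : ℤ) - 4 * s + (T - 2 * w) :=
    ⟨(((n : ℤ) - 4 * s + (T - 2 * w)) / 2).toNat, by omega⟩
  obtain ⟨q, hq⟩ : ∃ q : ℕ, (q : ℤ) * 2 = (n : ℤ) - 4 * s - (T - 2 * w) :=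
    ⟨(((n : ℤ) - 4 * s - (T - 2 * w)) / 2).toNat, by omega⟩
  obtain ⟨u, hu⟩ : ∃ u : ℕ, (u : ℤ) * 2 = s + w := ⟨((s + w) / 2).toNat, by omega⟩
  obtain ⟨v, hv⟩ : ∃ v : ℕ, (v : ℤ) * 2 = s - w := ⟨((s - w) / 2).toNat, by omega⟩
  refine mem_S_of_list m n T
    (List.replicate p 1 ++ List.replicate q (-1) ++ List.replicate u 2 ++ List.replicate v (-2))
    ?_ ?_ ?_
  · have : ((p + q + u + v : ℕ) : ℤ) ≤ (m : ℤ) := by push_cast; omega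
    simp only [List.length_append, List.length_replicate]
    exact_mod_cast this
  · simp only [List.sum_append, List.sum_replicate, nsmul_eq_mul]
    omega
  · simp only [List.map_append, List.map_replicate, List.sum_append, List.sum_replicate,
      nsmul_eq_mul]
    norm_num
    omega

lemma fullmaster (m n s : ℕ) (hs1 : 1 ≤ s)
    (hcnt : (n : ℤ) - 3 * s ≤ m)
    (hA : (m : ℤ) * n ≤ ((n : ℤ) - 2 * s + 2) ^ 2)
    (hB1 : 6 * (s : ℤ) - 3 ≤ n) (hB2 : 4 * (s : ℤ) + 2 ≤ n)
    (hBe : s % 2 = 0 → 6 * (s : ℤ) - 1 ≤ n) : Sfull m n := by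
  intro T hpar hT2
  have hs1' : (1 : ℤ) ≤ (s : ℕ) := by exact_mod_cast hs1
  have hub : T ≤ (n : ℤ) - 2 * s := by
    by_contra h
    push_neg at h
    have h2 : (n : ℤ) - 2 * s + 2 ≤ T := by omega
    nlinarith
  have hlb : -((n : ℤ) - 2 * s) ≤ T := by
    by_contra h
    push_neg at h
    have h2 : T ≤ -((n : ℤ) - 2 * s + 2) := by omega
    nlinarith
  have hTn : (T - (n : ℤ)) % 2 = 0 := by omega
  rcases le_or_gt (2 * (s : ℤ)) T with h1 | h1
  · exact key m n s T s (by positivity) (by rw [abs_of_nonneg] <;> omega)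
      (by omega) hTn (by rw [abs_of_nonneg] <;> omega) hcnt
  rcases le_or_gt T (-(2 * (s : ℤ))) with h2 | h2
  · exact key m n s T (-(s : ℤ)) (by positivity) (by rw [abs_of_nonpos] <;> omega)
      (by omega) hTn (by rw [abs_of_nonpos] <;> omega) hcnt
  · rcases Nat.even_or_odd s with he | ho
    · have hse : (s : ℤ) % 2 = 0 := by
        obtain ⟨k, hk⟩ := he; omega
      have hBe' := hBe (by omega)
      refine key m n s T 0 (by positivity) (by simp) ?_ hTn ?_ hcnt
      · omega
      · rw [abs_le]; omega
    · have hso : (s : ℤ) % 2 = 1 := by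
        obtain ⟨k, hk⟩ := ho; omega
      rcases le_or_gt 0 T with ht | ht
      · refine key m n s T 1 (by positivity) (by rw [abs_one]; omega) (by omega) hTn ?_ hcnt
        rw [abs_le]; omega
      · refine key m n s T (-1) (by positivity) (by rw [abs_neg, abs_one]; omega) (by omega)
          hTn ?_ hcnt
        rw [abs_le]; omega

lemma not_mem (m n : ℕ) (T : ℤ) (h : (n : ℤ) + 2 * m < 3 * T) : T ∉ S m n := by
  rintro ⟨x, hs, hq⟩
  have hkey : ∀ i, 3 * x i ≤ (x i) ^ 2 + 2 := by
    intro i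
    rcases le_or_gt (x i) 1 with h' | h'
    · nlinarith [mul_nonneg (by linarith : (0:ℤ) ≤ 1 - x i) (by linarith : (0:ℤ) ≤ 2 - x i)]
    · have h2 : 2 ≤ x i := by omega
      nlinarith [mul_nonneg (by linarith : (0:ℤ) ≤ x i - 1) (by linarith : (0:ℤ) ≤ x i - 2)]
  have : 3 * T ≤ (n : ℤ) + 2 * m := by
    calc 3 * T = ∑ i, 3 * x i := by rw [← hs, Finset.mul_sum]
    _ ≤ ∑ i, ((x i) ^ 2 + 2) := Finset.sum_le_sum (fun i _ => hkey i)
    _ = (n : ℤ) + 2 * m := by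
        rw [Finset.sum_add_distrib, hq, Finset.sum_const, Finset.card_univ]
        simp [mul_comm]
  omega

theorem stmt18 :
    ((∀ n : ℕ, 10 ≤ n → n ≤ 18 → Sfull 9 n) ∧ ¬ Sfull 9 19) ∧
    (∀ m : ℕ, 10 ≤ m →
      ((∀ n : ℕ, m < n → n ≤ m + 6 → Sfull m n) ∧ ¬ Sfull m (m + 7))) := by
  refine ⟨⟨?_, ?_⟩, ?_⟩
  · intro n h1 h2
    interval_cases n
    · exact fullmaster 9 10 1 (by norm_num) (by norm_num) (by norm_num) (by norm_num)
        (by norm_num) (by norm_num)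
    · exact fullmaster 9 11 1 (by norm_num) (by norm_num) (by norm_num) (by norm_num)
        (by norm_num) (by norm_num)
    · exact fullmaster 9 12 1 (by norm_num) (by norm_num) (by norm_num) (by norm_num)
        (by norm_num) (by norm_num)
    · exact fullmaster 9 13 2 (by norm_num) (by norm_num) (by norm_num) (by norm_num)
        (by norm_num) (by norm_num)
    · exact fullmaster 9 14 2 (by norm_num) (by norm_num) (by norm_num) (by norm_num)
        (by norm_num) (by norm_num)
    · exact fullmaster 9 15 2 (by norm_num) (by norm_num) (by norm_num) (by norm_num)
        (by norm_num) (by norm_num)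
    · exact fullmaster 9 16 3 (by norm_num) (by norm_num) (by norm_num) (by norm_num)
        (by norm_num) (by norm_num)
    · exact fullmaster 9 17 3 (by norm_num) (by norm_num) (by norm_num) (by norm_num)
        (by norm_num) (by norm_num)
    · exact fullmaster 9 18 3 (by norm_num) (by norm_num) (by norm_num) (by norm_num)
        (by norm_num) (by norm_num)
  · intro h
    exact not_mem 9 19 13 (by norm_num) (h 13 (by norm_num) (by norm_num))
  · intro m hm
    have hm' : (10 : ℤ) ≤ (m : ℤ) := by exact_mod_cast hm
    constructor
    · intro n h1 h2
      obtain ⟨d, rfl⟩ : ∃ d, n = m + d := ⟨n - m, by omega⟩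
      have hd1 : 1 ≤ d := by omega
      have hd2 : d ≤ 6 := by omega
      interval_cases d
      · exact fullmaster m (m + 1) 1 (by norm_num) (by push_cast; omega)
          (by push_cast; nlinarith) (by push_cast; omega) (by push_cast; omega) (by norm_num)
      · exact fullmaster m (m + 2) 1 (by norm_num) (by push_cast; omega)
          (by push_cast; nlinarith) (by push_cast; omega) (by push_cast; omega) (by norm_num)
      · exact fullmaster m (m + 3) 1 (by norm_num) (by push_cast; omega)
          (by push_cast; nlinarith) (by push_cast; omega) (by push_cast; omega) (by norm_num)
      · exact fullmaster m (m + 4) 2 (by norm_num) (by push_cast; omega)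
          (by push_cast; nlinarith) (by push_cast; omega) (by push_cast; omega)
          (fun _ => by push_cast; omega)
      · exact fullmaster m (m + 5) 2 (by norm_num) (by push_cast; omega)
          (by push_cast; nlinarith) (by push_cast; omega) (by push_cast; omega)
          (fun _ => by push_cast; omega)
      · exact fullmaster m (m + 6) 2 (by norm_num) (by push_cast; omega)
          (by push_cast; nlinarith) (by push_cast; omega) (by push_cast; omega)
          (fun _ => by push_cast; omega)
    · intro h
      refine not_mem m (m + 7) ((m : ℤ) + 3) (by push_cast; omega)
        (h ((m : ℤ) + 3) (by push_cast; omega) (by push_cast; nlinarith))
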